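/- An element w_α of W(B_n) (α a partition of n, w_α a product of Coxeter elements of W(B_{α_i})) lies in the index-2 subgroup W(D_n) if and only if α has an even number of parts; and the set {w_α : α ⊢ n, |α| even} is a complete set of representatives for the elliptic conjugacy classes of W(D_n). -/

import Mathlib

set_option maxHeartbeats 1000000
set_option synthInstance.maxHeartbeats 400000

open scoped BigOperators Classical

noncomputable section

/-- an element of `W(B_n)`. -/
abbrev BElt (n : ℕ) := Equiv.Perm (Fin n) × (Fin n → Bool)

/-- the signed permutation matrix of `p ∈ W(B_n)`, over `ℚ`. -/
def BMatQ (n : ℕ) (p : BElt n) : Matrix (Fin n) (Fin n) ℚ :=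
  Matrix.of fun i j => if p.1 j = i then (if p.2 j then -1 else 1) else 0

/-- membership in `W(D_n)`: an even number of sign changes. -/
def inD (n : ℕ) (p : BElt n) : Prop :=
  Even (Finset.univ.filter (fun i => p.2 i = true)).card

/-- every cycle of `p` (fixed points included) has sign product `-1`;
such elements are the `w_α`, `α` the cycle type. -/
def negAll (n : ℕ) (p : BElt n) : Prop :=
  ∀ i : Fin n,
    (∏ j ∈ Finset.univ.filter (fun j => p.1.SameCycle i j),
      (if p.2 j then (-1 : ℤ) else 1)) = -1

/-- conjugacy inside `W(D_n)`. -/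
def ConjD (n : ℕ) (p p' : BElt n) : Prop :=
  ∃ r : BElt n, inD n r ∧ BMatQ n r * BMatQ n p = BMatQ n p' * BMatQ n r

/-- the cycle type, as a partition of `n` (fixed points included). -/
def cycType (n : ℕ) (p : BElt n) : Multiset ℕ :=
  (Equiv.Perm.partition p.1).parts

section AuxHelpers
variable {n : ℕ}

def orb (p : Equiv.Perm (Fin n)) (i : Fin n) : Finset (Fin n) :=
  Finset.univ.filter (fun j => p.SameCycle i j)

lemma mem_orb {p : Equiv.Perm (Fin n)} {i j : Fin n} :
    j ∈ orb p i ↔ p.SameCycle i j := by simp [orb]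

lemma self_mem_orb (p : Equiv.Perm (Fin n)) (i : Fin n) : i ∈ orb p i :=
  mem_orb.2 (Equiv.Perm.SameCycle.refl p i)

lemma orb_eq_of_sameCycle {p : Equiv.Perm (Fin n)} {i j : Fin n}
    (h : p.SameCycle i j) : orb p i = orb p j := by
  ext k; simp only [mem_orb]
  exact ⟨fun h' => h.symm.trans h', fun h' => h.trans h'⟩

lemma minPer_pos (p : Equiv.Perm (Fin n)) (i : Fin n) :
    0 < Function.minimalPeriod (⇑p) i := by
  apply Function.IsPeriodicPt.minimalPeriod_pos (orderOf_pos p)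
  show (⇑p)^[orderOf p] i = i
  rw [Equiv.Perm.iterate_eq_pow, pow_orderOf_eq_one]; rfl

lemma pow_minPer (p : Equiv.Perm (Fin n)) (i : Fin n) :
    (p ^ Function.minimalPeriod (⇑p) i) i = i :=
  Function.isPeriodicPt_minimalPeriod (⇑p) i

lemma orb_eq_image (p : Equiv.Perm (Fin n)) (i : Fin n) :
    orb p i = (Finset.range (Function.minimalPeriod (⇑p) i)).image (fun t => (p ^ t) i) := by
  ext j
  simp only [mem_orb, Finset.mem_image, Finset.mem_range]
  constructor
  · intro h
    obtain ⟨k, -, hk⟩ := h.exists_pow_eq'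
    refine ⟨k % Function.minimalPeriod (⇑p) i, Nat.mod_lt _ (minPer_pos p i), ?_⟩
    show (⇑p)^[k % _] i = j
    rw [Function.iterate_mod_minimalPeriod_eq]; exact hk
  · rintro ⟨t, -, rfl⟩
    exact ⟨(t : ℤ), by simp [zpow_natCast]⟩

lemma prod_orb {M : Type*} [CommMonoid M] (p : Equiv.Perm (Fin n)) (i : Fin n) (f : Fin n → M) :
    ∏ j ∈ orb p i, f j = ∏ t ∈ Finset.range (Function.minimalPeriod (⇑p) i), f ((p ^ t) i) := by
  rw [orb_eq_image, Finset.prod_image]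
  intro a ha b hb hab
  exact Function.iterate_injOn_Iio_minimalPeriod (Finset.mem_range.1 ha) (Finset.mem_range.1 hb) hab

lemma card_orb (p : Equiv.Perm (Fin n)) (i : Fin n) :
    (orb p i).card = Function.minimalPeriod (⇑p) i := by
  rw [orb_eq_image, Finset.card_image_of_injOn, Finset.card_range]
  intro a ha b hb hab
  exact Function.iterate_injOn_Iio_minimalPeriod (Finset.mem_range.1 ha) (Finset.mem_range.1 hb) hab

/-- base point (minimum) of the cycle of `j`. -/
def cbase (p : Equiv.Perm (Fin n)) (j : Fin n) : Fin n :=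
  (orb p j).min' ⟨j, self_mem_orb p j⟩

lemma sameCycle_cbase (p : Equiv.Perm (Fin n)) (j : Fin n) :
    p.SameCycle j (cbase p j) :=
  mem_orb.1 ((orb p j).min'_mem _)

lemma cbase_eq_of_sameCycle {p : Equiv.Perm (Fin n)} {i j : Fin n}
    (h : p.SameCycle i j) : cbase p i = cbase p j := by
  unfold cbase; congr 1; exact orb_eq_of_sameCycle h

lemma cbase_apply (p : Equiv.Perm (Fin n)) (j : Fin n) :
    cbase p (p j) = cbase p j :=
  (cbase_eq_of_sameCycle (Equiv.Perm.sameCycle_apply_right.2 (Equiv.Perm.SameCycle.refl p j))).symm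

lemma cbase_cbase (p : Equiv.Perm (Fin n)) (j : Fin n) :
    cbase p (cbase p j) = cbase p j :=
  (cbase_eq_of_sameCycle (sameCycle_cbase p j)).symm

lemma exists_pow_cbase (p : Equiv.Perm (Fin n)) (j : Fin n) :
    ∃ k : ℕ, (p ^ k) (cbase p j) = j := by
  obtain ⟨k, -, hk⟩ := (sameCycle_cbase p j).symm.exists_pow_eq'
  exact ⟨k, hk⟩

/-- index of `j` within its cycle, counted from the base point. -/
def kIdx (p : Equiv.Perm (Fin n)) (j : Fin n) : ℕ :=
  Nat.find (exists_pow_cbase p j)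

lemma pow_kIdx (p : Equiv.Perm (Fin n)) (j : Fin n) :
    (p ^ kIdx p j) (cbase p j) = j := Nat.find_spec (exists_pow_cbase p j)

lemma kIdx_lt (p : Equiv.Perm (Fin n)) (j : Fin n) :
    kIdx p j < Function.minimalPeriod (⇑p) (cbase p j) := by
  by_contra hlt
  push_neg at hlt
  have h1 : (p ^ (kIdx p j % Function.minimalPeriod (⇑p) (cbase p j))) (cbase p j) = j := by
    show (⇑p)^[_ % _] _ = _
    rw [Function.iterate_mod_minimalPeriod_eq]
    exact pow_kIdx p j
  exact Nat.find_min (exists_pow_cbase p j)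
    (lt_of_lt_of_le (Nat.mod_lt _ (minPer_pos p _)) hlt) h1

lemma cbase_fixed {p : Equiv.Perm (Fin n)} {j : Fin n} (h : cbase p j = j) :
    kIdx p j = 0 := by
  rw [kIdx, Nat.find_eq_zero]
  simpa using h

/-- solve the cocycle equation `g (p j) = c j * g j` along each cycle. -/
def cocyc (p : Equiv.Perm (Fin n)) (c : Fin n → ℚ) (j : Fin n) : ℚ :=
  ∏ t ∈ Finset.range (kIdx p j), c ((p ^ t) (cbase p j))

lemma cocyc_spec (p : Equiv.Perm (Fin n)) (c : Fin n → ℚ) (j : Fin n)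
    (hc : ∏ j' ∈ orb p j, c j' = 1) :
    cocyc p c (p j) = c j * cocyc p c j := by
  set i := cbase p j with hi
  set m := Function.minimalPeriod (⇑p) i with hm
  set k := kIdx p j with hk
  have hbpj : cbase p (p j) = i := cbase_apply p j
  have hkj : (p ^ k) i = j := pow_kIdx p j
  have hklt : k < m := kIdx_lt p j
  have hpm : (p ^ m) i = i := pow_minPer p i
  have horb : orb p j = orb p i := orb_eq_of_sameCycle (sameCycle_cbase p j)
  have hsucc : (p ^ (k + 1)) i = p j := by
    rw [pow_succ']
    simp only [Equiv.Perm.mul_apply, hkj]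
  have hor : k + 1 = m ∨ k + 1 < m := by omega
  rcases hor with hke | hke
  · -- wrap-around : k + 1 = m
    have hpj : p j = i := by rw [← hsucc, hke, hpm]
    have hkpj : kIdx p (p j) = 0 := by
      rw [kIdx, Nat.find_eq_zero]
      rw [hbpj, hpj]; rfl
    have : cocyc p c (p j) = 1 := by
      rw [cocyc, hkpj]; simp
    rw [this]
    have : c j * cocyc p c j = ∏ t ∈ Finset.range (k+1), c ((p ^ t) i) := by
      rw [Finset.prod_range_succ, hkj, mul_comm, cocyc, ← hk, ← hi]
    rw [this, hke, ← prod_orb, ← horb, hc]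
  · -- generic step : kIdx (p j) = k + 1
    have hkpj : kIdx p (p j) = k + 1 := by
      rw [kIdx, Nat.find_eq_iff]
      constructor
      · rw [hbpj]; exact hsucc
      · intro k' hk' hck'
        rw [hbpj] at hck'
        rcases Nat.eq_zero_or_pos k' with rfl | hk'pos
        · -- i = p j would make k+1 a period < m
          have : (p ^ (k+1)) i = i := by rw [hsucc, ← hck']; rfl
          have hper : Function.IsPeriodicPt (⇑p) (k+1) i := this
          exact absurd (Function.IsPeriodicPt.minimalPeriod_le (Nat.succ_pos k) hper)
            (by omega)
        · -- p^(k'-1) i = j with k'-1 < k contradicts minimality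
          have : (p ^ (k' - 1)) i = j := by
            have h2 : p ((p ^ (k' - 1)) i) = p j := by
              rw [← Equiv.Perm.mul_apply, ← pow_succ', Nat.sub_add_cancel hk'pos, hck']
            exact p.injective h2
          have hlt2 : k' - 1 < kIdx p j := by omega
          exact Nat.find_min (exists_pow_cbase p j) hlt2 this
    show ∏ t ∈ Finset.range (kIdx p (p j)), c ((p ^ t) (cbase p (p j))) = _
    rw [hkpj, hbpj, Finset.prod_range_succ, hkj, mul_comm]
    rfl

lemma cocyc_ne_zero (p : Equiv.Perm (Fin n)) (c : Fin n → ℚ)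
    (hcne : ∀ j, c j ≠ 0) (j : Fin n) : cocyc p c j ≠ 0 :=
  Finset.prod_ne_zero_iff.2 fun t _ => hcne _

lemma cocyc_pm_one (p : Equiv.Perm (Fin n)) (c : Fin n → ℚ)
    (hc : ∀ j, c j = 1 ∨ c j = -1) (j : Fin n) :
    cocyc p c j = 1 ∨ cocyc p c j = -1 := by
  have : IsUnit (cocyc p c j) ∧ (cocyc p c j)^2 = 1 := by
    simp only [cocyc]
    constructor
    · apply Finset.prod_induction _ IsUnit (fun a b => IsUnit.mul) isUnit_one
      intro x _
      rcases hc ((p ^ x) (cbase p j)) with h | h <;> rw [h] <;> simp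
    · rw [← Finset.prod_pow]
      apply Finset.prod_eq_one
      intro x _
      rcases hc ((p ^ x) (cbase p j)) with h | h <;> rw [h] <;> ring
  have h2 := this.2
  have : (cocyc p c j - 1) * (cocyc p c j + 1) = 0 := by ring_nf; linear_combination h2
  rcases mul_eq_zero.1 this with h | h
  · left; linarith
  · right; linarith


variable {n : ℕ}

/-- multiplication of signed permutations. -/
def bmul (a b : BElt n) : BElt n :=
  (a.1 * b.1, fun j => xor (a.2 (b.1 j)) (b.2 j))

lemma BMatQ_bmul (a b : BElt n) :
    BMatQ n (bmul a b) = BMatQ n a * BMatQ n b := by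
  ext i j
  simp only [BMatQ, bmul, Matrix.mul_apply, Matrix.of_apply]
  have : ∀ k : Fin n, (if a.1 k = i then (if a.2 k then (-1:ℚ) else 1) else 0) *
      (if b.1 j = k then (if b.2 j then (-1:ℚ) else 1) else 0)
      = if k = b.1 j then ((if a.1 k = i then (if a.2 k then (-1:ℚ) else 1) else 0) *
        (if b.2 j then (-1:ℚ) else 1)) else 0 := by
    intro k
    by_cases h : k = b.1 j
    · subst h; simp
    · rw [if_neg (show ¬b.1 j = k from fun h' => h h'.symm), mul_zero, if_neg h]
  rw [Finset.sum_congr rfl (fun k _ => this k), Finset.sum_ite_eq' Finset.univ (b.1 j)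
    (fun k => (if a.1 k = i then (if a.2 k then (-1:ℚ) else 1) else 0) *
      (if b.2 j then (-1:ℚ) else 1)), if_pos (Finset.mem_univ _)]
  simp only [Equiv.Perm.mul_apply]
  by_cases h : a.1 (b.1 j) = i
  · refine (if_pos h).trans ?_
    rw [if_pos h]
    rcases Bool.dichotomy (a.2 (b.1 j)) with h2 | h2 <;>
      rcases Bool.dichotomy (b.2 j) with h3 | h3 <;> simp only [h2, h3] <;> norm_num
  · refine (if_neg h).trans ?_
    rw [if_neg h, zero_mul]

lemma BMatQ_injective : Function.Injective (BMatQ n) := by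
  intro a b hab
  have hperm : a.1 = b.1 := by
    apply Equiv.ext
    intro j
    have h1 : BMatQ n a (a.1 j) j = BMatQ n b (a.1 j) j := by rw [hab]
    simp only [BMatQ, Matrix.of_apply] at h1
    rw [if_pos trivial] at h1
    by_contra hne
    rw [if_neg (fun h : b.1 j = a.1 j => hne h.symm)] at h1
    rcases Bool.dichotomy (a.2 j) with h | h <;> simp only [h] at h1 <;> norm_num at h1
  refine Prod.ext hperm (funext fun j => ?_)
  have h1 : BMatQ n a (a.1 j) j = BMatQ n b (a.1 j) j := by rw [hab]
  simp only [BMatQ, Matrix.of_apply] at h1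
  rw [if_pos trivial, hperm, if_pos rfl] at h1
  rcases Bool.dichotomy (a.2 j) with h | h <;> rcases Bool.dichotomy (b.2 j) with h' | h' <;>
    simp only [h, h'] at h1 ⊢ <;> norm_num at h1

lemma BMatQ_one : BMatQ n (1, fun _ => false) = 1 := by
  ext i j
  simp only [BMatQ, Matrix.of_apply, Matrix.one_apply, Equiv.Perm.one_apply]
  by_cases h : j = i
  · subst h; simp
  · have h2 : ¬ i = j := fun h' => h h'.symm
    simp [h, h2]

/-- total sign, as `±1 ∈ ℤ`. -/
def signProdZ (p : BElt n) : ℤ := ∏ j, (if p.2 j then (-1 : ℤ) else 1)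

lemma signProdZ_eq_pow (p : BElt n) :
    signProdZ p = (-1) ^ (Finset.univ.filter (fun i => p.2 i = true)).card := by
  rw [signProdZ, Finset.prod_ite, Finset.prod_const, Finset.prod_const, one_pow, mul_one]

lemma inD_iff_signProdZ (p : BElt n) : inD n p ↔ signProdZ p = 1 := by
  rw [signProdZ_eq_pow, inD, neg_one_pow_eq_one_iff_even (by norm_num)]

lemma signProdZ_pm (p : BElt n) : signProdZ p = 1 ∨ signProdZ p = -1 := by
  rw [signProdZ_eq_pow]
  rcases Nat.even_or_odd (Finset.univ.filter (fun i => p.2 i = true)).card with h | h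
  · left; exact h.neg_one_pow
  · right; exact h.neg_one_pow

lemma signProdZ_bmul (a b : BElt n) :
    signProdZ (bmul a b) = signProdZ a * signProdZ b := by
  simp only [signProdZ, bmul]
  have h1 : ∀ j : Fin n, (if xor (a.2 (b.1 j)) (b.2 j) then (-1:ℤ) else 1)
      = (if a.2 (b.1 j) then (-1:ℤ) else 1) * (if b.2 j then (-1:ℤ) else 1) := by
    intro j
    rcases Bool.dichotomy (a.2 (b.1 j)) with h2 | h2 <;>
      rcases Bool.dichotomy (b.2 j) with h3 | h3 <;> simp only [h2, h3] <;> norm_num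
  refine (Finset.prod_congr rfl (fun j _ => h1 j)).trans ?_
  rw [Finset.prod_mul_distrib,
    Equiv.prod_comp b.1 (fun k => if a.2 k then (-1:ℤ) else 1)]

/-- the eigen-equation, entrywise. -/
lemma mulVec_eq_iff (p : BElt n) (v : Fin n → ℚ) :
    (BMatQ n p).mulVec v = v ↔
      ∀ j, v (p.1 j) = (if p.2 j then (-1:ℚ) else 1) * v j := by
  have key : ∀ a, (BMatQ n p).mulVec v a
      = (if p.2 (p.1⁻¹ a) then (-1:ℚ) else 1) * v (p.1⁻¹ a) := by
    intro a
    simp only [Matrix.mulVec, dotProduct, BMatQ, Matrix.of_apply]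
    have : ∀ j : Fin n, (if p.1 j = a then (if p.2 j then (-1:ℚ) else 1) else 0) * v j
        = if j = p.1⁻¹ a then (if p.2 j then (-1:ℚ) else 1) * v j else 0 := by
      intro j
      by_cases h : j = p.1⁻¹ a
      · subst h; simp
      · rw [if_neg h, if_neg, zero_mul]
        intro h'; exact h (by rw [← h']; simp)
    rw [Finset.sum_congr rfl (fun j _ => this j),
      Finset.sum_ite_eq' Finset.univ (p.1⁻¹ a), if_pos (Finset.mem_univ _)]
  constructor
  · intro h j
    have := congrFun h (p.1 j)
    rw [key] at this
    simpa using this.symm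
  · intro h
    funext a
    rw [key]
    have := h (p.1⁻¹ a)
    rw [show p.1 (p.1⁻¹ a) = a from p.1.apply_symm_apply a] at this
    exact this.symm

end AuxHelpers
section MainLemmas
variable {n : ℕ}

lemma negAll_orb (p : BElt n) (h : negAll n p) (i : Fin n) :
    ∏ j ∈ orb p.1 i, (if p.2 j then (-1 : ℚ) else 1) = -1 := by
  have hcast := congrArg (fun z : ℤ => (z : ℚ)) (h i)
  push_cast at hcast
  exact hcast

/-- Part 2 : each `w_α` is elliptic. -/
lemma elliptic_of_negAll (p : BElt n) (h : negAll n p) :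
    Matrix.det ((1 : Matrix (Fin n) (Fin n) ℚ) - BMatQ n p) ≠ 0 := by
  intro hdet
  obtain ⟨v, hv0, hv⟩ := Matrix.exists_mulVec_eq_zero_iff.2 hdet
  rw [Matrix.sub_mulVec, Matrix.one_mulVec, sub_eq_zero] at hv
  have heq := (mulVec_eq_iff p v).1 hv.symm
  apply hv0
  funext j
  have key : ∀ t : ℕ, v ((p.1 ^ t) j)
      = (∏ t' ∈ Finset.range t, (if p.2 ((p.1 ^ t') j) then (-1:ℚ) else 1)) * v j := by
    intro t
    induction t with
    | zero => simp
    | succ t ih =>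
      have h1 : (p.1 ^ (t+1)) j = p.1 ((p.1 ^ t) j) := by
        rw [pow_succ']; rfl
      rw [h1, heq ((p.1 ^ t) j), ih, Finset.prod_range_succ]
      ring
  have h2 := key (Function.minimalPeriod (⇑p.1) j)
  have h3 := prod_orb p.1 j (fun x => if p.2 x then (-1:ℚ) else 1)
  rw [pow_minPer, ← h3, negAll_orb p h j] at h2
  have : v j = 0 := by linarith
  simpa using this

/-- every elliptic element has all cycles negative. -/
lemma negAll_of_elliptic (p : BElt n)
    (hd : Matrix.det ((1 : Matrix (Fin n) (Fin n) ℚ) - BMatQ n p) ≠ 0) :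
    negAll n p := by
  by_contra hneg
  rw [negAll] at hneg
  push_neg at hneg
  obtain ⟨i, hi⟩ := hneg
  -- the product of `±1`s must then be `1`
  have hone : ∏ j ∈ orb p.1 i, (if p.2 j then (-1:ℚ) else 1) = 1 := by
    have hu : IsUnit (∏ j ∈ Finset.univ.filter (fun j => p.1.SameCycle i j),
        (if p.2 j then (-1 : ℤ) else 1)) := by
      apply Finset.prod_induction _ IsUnit (fun a b => IsUnit.mul) isUnit_one
      intro x _
      split <;> simp
    rcases Int.isUnit_iff.1 hu with h | h
    · have hcast := congrArg (fun z : ℤ => (z : ℚ)) h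
      push_cast at hcast
      exact hcast
    · exact absurd h hi
  set c : Fin n → ℚ :=
    fun j => if p.1.SameCycle i j then (if p.2 j then (-1:ℚ) else 1) else 1 with hc_def
  have hc : ∀ j, ∏ j' ∈ orb p.1 j, c j' = 1 := by
    intro j
    by_cases hj : p.1.SameCycle i j
    · rw [← orb_eq_of_sameCycle hj, ← hone]
      apply Finset.prod_congr rfl
      intro j' hj'
      simp only [hc_def]
      rw [if_pos (mem_orb.1 hj')]
    · apply Finset.prod_eq_one
      intro j' hj'
      simp only [hc_def]
      rw [if_neg (fun h => hj (h.trans (mem_orb.1 hj').symm))]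
  have hcne : ∀ j, c j ≠ 0 := by
    intro j
    simp only [hc_def]
    split
    · split <;> norm_num
    · norm_num
  set v : Fin n → ℚ := fun j => if p.1.SameCycle i j then cocyc p.1 c j else 0 with hv_def
  have hMv : (BMatQ n p).mulVec v = v := by
    rw [mulVec_eq_iff]
    intro j
    by_cases hj : p.1.SameCycle i j
    · have hpj : p.1.SameCycle i (p.1 j) := Equiv.Perm.sameCycle_apply_right.2 hj
      simp only [hv_def]
      rw [if_pos hpj, if_pos hj, cocyc_spec p.1 c j (hc j)]
      simp only [hc_def]
      rw [if_pos hj]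
    · have hpj : ¬ p.1.SameCycle i (p.1 j) :=
        fun h => hj (Equiv.Perm.sameCycle_apply_right.1 h)
      simp only [hv_def]
      rw [if_neg hpj, if_neg hj, mul_zero]
  apply hd
  apply Matrix.exists_mulVec_eq_zero_iff.1
  refine ⟨v, ?_, ?_⟩
  · intro h0
    have := congrFun h0 i
    simp only [hv_def, if_pos (Equiv.Perm.SameCycle.refl p.1 i)] at this
    exact cocyc_ne_zero p.1 c hcne i this
  · rw [Matrix.sub_mulVec, Matrix.one_mulVec, hMv, sub_self]

end MainLemmas
section Part1
variable {n : ℕ}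

lemma cbase_mem_image (p : Equiv.Perm (Fin n)) {i : Fin n}
    (hi : i ∈ Finset.univ.image (cbase p)) : cbase p i = i := by
  obtain ⟨j, -, rfl⟩ := Finset.mem_image.1 hi
  exact cbase_cbase p j

lemma fiber_cbase (p : Equiv.Perm (Fin n)) {i : Fin n}
    (hi : cbase p i = i) :
    Finset.univ.filter (fun j => cbase p j = i) = orb p i := by
  ext j
  simp only [Finset.mem_filter, Finset.mem_univ, true_and, mem_orb]
  constructor
  · intro h
    exact ((sameCycle_cbase p j).trans (by rw [h])).symm
  · intro h
    rw [← cbase_eq_of_sameCycle h, hi]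

lemma signProdZ_eq_orbits (p : BElt n) (h : negAll n p) :
    signProdZ p = (-1) ^ (Finset.univ.image (cbase p.1)).card := by
  have hmaps : ∀ j ∈ Finset.univ, cbase p.1 j ∈ Finset.univ.image (cbase p.1) :=
    fun j _ => Finset.mem_image_of_mem _ (Finset.mem_univ j)
  have := Finset.prod_fiberwise_of_maps_to hmaps (fun j => if p.2 j then (-1:ℤ) else 1)
  rw [signProdZ, ← this]
  rw [Finset.prod_congr rfl (fun i hi => ?_), Finset.prod_const]
  rw [fiber_cbase p.1 (cbase_mem_image p.1 hi)]
  exact h i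

lemma card_cbase_image (p : Equiv.Perm (Fin n)) :
    (Finset.univ.image (cbase p)).card
      = Multiset.card (Equiv.Perm.partition p).parts := by
  rw [Equiv.Perm.parts_partition, Multiset.card_add, Multiset.card_replicate]
  have hct : Multiset.card p.cycleType = p.cycleFactorsFinset.card := by
    rw [Equiv.Perm.cycleType_def, Multiset.card_map]; rfl
  rw [hct]
  set B := Finset.univ.image (cbase p) with hB
  have hsplit := Finset.card_filter_add_card_filter_not
    (s := B) (fun i => i ∈ p.support)
  rw [← hsplit]
  congr 1
  · -- orbits meeting the support ↔ cycle factors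
    apply Finset.card_bij (fun i _ => p.cycleOf i)
    · intro i hi
      simp only [Finset.mem_filter] at hi
      exact Equiv.Perm.cycleOf_mem_cycleFactorsFinset_iff.2 hi.2
    · intro i hi i' hi' hii'
      simp only [Finset.mem_filter, hB] at hi hi'
      have h1 : i ∈ (p.cycleOf i).support :=
        Equiv.Perm.mem_support_cycleOf_iff.2 ⟨Equiv.Perm.SameCycle.refl p i, hi.2⟩
      rw [hii'] at h1
      have h2 : p.SameCycle i' i := (Equiv.Perm.mem_support_cycleOf_iff.1 h1).1
      rw [← cbase_mem_image p hi.1, ← cbase_mem_image p hi'.1,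
        cbase_eq_of_sameCycle h2]
    · intro c hc
      obtain ⟨x, hx1, -⟩ := (Equiv.Perm.mem_cycleFactorsFinset_iff.1 hc).1
      have hxsupc : x ∈ c.support := Equiv.Perm.mem_support.2 hx1
      have hxc : c = p.cycleOf x := Equiv.Perm.cycle_is_cycleOf hxsupc hc
      have hxs : x ∈ p.support := by
        rw [Equiv.Perm.mem_support]
        intro hfix
        apply hx1
        have h2 := (Equiv.Perm.mem_cycleFactorsFinset_iff.1 hc).2 x hxsupc
        rw [h2, hfix]
      refine ⟨cbase p x, ?_, ?_⟩
      · simp only [Finset.mem_filter, hB]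
        constructor
        · exact Finset.mem_image_of_mem _ (Finset.mem_univ x)
        · rw [Equiv.Perm.mem_support]
          intro hfix
          have := ((sameCycle_cbase p x).symm.eq_of_left hfix)
          rw [this] at hfix
          rw [Equiv.Perm.mem_support] at hxs
          exact hxs hfix
      · rw [hxc, Equiv.Perm.SameCycle.cycleOf_eq (sameCycle_cbase p x).symm]
  · -- orbits of fixed points ↔ fixed points
    have hBsup : B.filter (fun i => ¬ i ∈ p.support)
        = Finset.univ.filter (fun i => ¬ i ∈ p.support) := by
      ext i
      simp only [Finset.mem_filter, Finset.mem_univ, true_and, hB]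
      constructor
      · intro h; exact h.2
      · intro h
        refine ⟨?_, h⟩
        have hfix : p i = i := by
          rw [Equiv.Perm.mem_support] at h; push_neg at h; exact h
        have : cbase p i = i := ((sameCycle_cbase p i).eq_of_left hfix).symm
        rw [← this]
        exact Finset.mem_image_of_mem _ (Finset.mem_univ i)
    rw [hBsup]
    have := Finset.card_filter_add_card_filter_not
      (s := (Finset.univ : Finset (Fin n))) (fun i => i ∈ p.support)
    have hfilt : Finset.univ.filter (fun i => i ∈ p.support) = p.support := by
      ext i; simp
    rw [hfilt] at this
    simp only [Finset.card_univ] at this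
    omega

/-- Part 1. -/
lemma part1 (p : BElt n) (h : negAll n p) :
    inD n p ↔ Even (Multiset.card (cycType n p)) := by
  rw [inD_iff_signProdZ, signProdZ_eq_orbits p h, cycType, ← card_cbase_image p.1,
    neg_one_pow_eq_one_iff_even (by norm_num)]

end Part1

section Part4
variable {n : ℕ}

lemma sgn_xor (a b : Bool) :
    (if xor a b then (-1:ℚ) else 1) = (if a then (-1:ℚ) else 1) * (if b then (-1:ℚ) else 1) := by
  cases a <;> cases b <;> norm_num

lemma sgn_inj {a b : Bool} (h : (if a then (-1:ℚ) else 1) = (if b then (-1:ℚ) else 1)) :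
    a = b := by
  cases a <;> cases b <;> first | rfl | (norm_num at h)

/-- conjugation transfers `SameCycle`. -/
lemma sameCycle_of_semiconj {σ p p' : Equiv.Perm (Fin n)} (hσ : σ * p = p' * σ)
    {j j' : Fin n} (h : p.SameCycle j j') : p'.SameCycle (σ j) (σ j') := by
  obtain ⟨k, hk⟩ := h
  refine ⟨k, ?_⟩
  have hconj : p' = σ * p * σ⁻¹ := (mul_inv_eq_iff_eq_mul.2 hσ).symm
  rw [hconj, conj_zpow]
  simp only [Equiv.Perm.mul_apply]
  rw [show σ⁻¹ (σ j) = j from σ.symm_apply_apply j, hk]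

/-- `ConjD` by way of `bmul`. -/
lemma conjD_iff_bmul (p p' : BElt n) :
    ConjD n p p' ↔ ∃ r : BElt n, inD n r ∧ bmul r p = bmul p' r := by
  unfold ConjD
  constructor
  · rintro ⟨r, hr, heq⟩
    exact ⟨r, hr, BMatQ_injective (by rw [BMatQ_bmul, BMatQ_bmul, heq])⟩
  · rintro ⟨r, hr, heq⟩
    exact ⟨r, hr, by rw [← BMatQ_bmul, ← BMatQ_bmul, heq]⟩

/-- forward direction of part 4: conjugate elements have the same type. -/
lemma cycType_eq_of_conjD (p p' : BElt n) (h : ConjD n p p') :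
    cycType n p = cycType n p' := by
  obtain ⟨r, -, heq⟩ := (conjD_iff_bmul p p').1 h
  have hperm : r.1 * p.1 = p'.1 * r.1 := congrArg Prod.fst heq
  have hconj : IsConj p.1 p'.1 := by
    rw [isConj_iff]
    refine ⟨r.1, ?_⟩
    rw [mul_inv_eq_iff_eq_mul, hperm]
  rw [cycType, cycType, (Equiv.Perm.partition_eq_of_isConj).1 hconj]

/-- backward direction of part 4. -/
lemma conjD_of_cycType_eq (p p' : BElt n) (hp : negAll n p) (hp' : negAll n p')
    (ht : cycType n p = cycType n p') : ConjD n p p' := by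
  -- a permutation conjugator
  have hpart : p.1.partition = p'.1.partition := Nat.Partition.ext ht
  obtain ⟨σ, hσ0⟩ := isConj_iff.1 (Equiv.Perm.partition_eq_of_isConj.2 hpart)
  have hσ : σ * p.1 = p'.1 * σ := by
    rw [← hσ0]; group
  have hsc : ∀ j j' : Fin n, p.1.SameCycle j j' → p'.1.SameCycle (σ j) (σ j') :=
    fun j j' h => sameCycle_of_semiconj hσ h
  have hsc' : ∀ j j' : Fin n, p'.1.SameCycle (σ j) (σ j') → p.1.SameCycle j j' := by
    intro j j' h
    have hσ' : σ⁻¹ * p'.1 = p.1 * σ⁻¹ := by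
      rw [← hσ0]; group
    have := sameCycle_of_semiconj hσ' h
    simpa using this
  -- orbit transfer
  have horbs : ∀ j : Fin n, orb p'.1 (σ j) = (orb p.1 j).image σ := by
    intro j
    ext y
    simp only [mem_orb, Finset.mem_image]
    constructor
    · intro h
      refine ⟨σ⁻¹ y, ?_, by simp⟩
      apply hsc' j (σ⁻¹ y)
      simpa using h
    · rintro ⟨x, hx, rfl⟩
      exact hsc j x hx
  -- the sign cocycle
  set c : Fin n → ℚ := fun j =>
    (if p.2 j then (-1:ℚ) else 1) * (if p'.2 (σ j) then (-1:ℚ) else 1) with hc_def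
  have hcpm : ∀ j, c j = 1 ∨ c j = -1 := by
    intro j
    simp only [hc_def]
    rcases Bool.dichotomy (p.2 j) with h1 | h1 <;> rcases Bool.dichotomy (p'.2 (σ j)) with h2 | h2 <;>
      simp only [h1, h2] <;> norm_num
  have hc : ∀ j, ∏ j' ∈ orb p.1 j, c j' = 1 := by
    intro j
    simp only [hc_def]
    rw [Finset.prod_mul_distrib, negAll_orb p hp j]
    have himg : ∏ j' ∈ orb p.1 j, (if p'.2 (σ j') then (-1:ℚ) else 1)
        = ∏ y ∈ orb p'.1 (σ j), (if p'.2 y then (-1:ℚ) else 1) := by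
      rw [horbs j, Finset.prod_image (fun a _ b _ hab => σ.injective hab)]
    rw [himg, negAll_orb p' hp' (σ j)]
    norm_num
  set g := cocyc p.1 c with hg_def
  set ε : Fin n → Bool := fun j => decide (g j = -1) with hε_def
  have hgε : ∀ j, (if ε j then (-1:ℚ) else 1) = g j := by
    intro j
    have h' : g j = 1 ∨ g j = -1 := cocyc_pm_one p.1 c hcpm j
    simp only [hε_def]
    rcases h' with h | h <;> rw [h] <;> norm_num
  set r0 : BElt n := (σ, ε) with hr0_def
  have key0 : bmul r0 p = bmul p' r0 := by
    refine Prod.ext hσ (funext fun j => ?_)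
    apply sgn_inj
    show (if xor (ε (p.1 j)) (p.2 j) then (-1:ℚ) else 1)
        = (if xor (p'.2 (σ j)) (ε j) then (-1:ℚ) else 1)
    rw [sgn_xor, sgn_xor, hgε, hgε]
    rw [show g (p.1 j) = c j * g j from cocyc_spec p.1 c j (hc j)]
    simp only [hc_def]
    have hsq : (if p.2 j then (-1:ℚ) else 1) * (if p.2 j then (-1:ℚ) else 1) = 1 := by
      rcases Bool.dichotomy (p.2 j) with h1 | h1 <;> rw [h1] <;> norm_num
    linear_combination ((if p'.2 (σ j) = true then (-1:ℚ) else 1) * g j) * hsq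
  by_cases hr0 : inD n r0
  · exact (conjD_iff_bmul p p').2 ⟨r0, hr0, key0⟩
  · -- fix the parity using a negative cycle of `p`
    have hi0 : Nonempty (Fin n) := by
      by_contra hempty
      apply hr0
      rw [inD]
      have huniv : (Finset.univ : Finset (Fin n)) = ∅ :=
        Finset.univ_eq_empty_iff.2 (not_nonempty_iff.1 hempty)
      rw [huniv, Finset.filter_empty, Finset.card_empty]
      exact Even.zero
    obtain ⟨i0⟩ := hi0
    set z : BElt n := (p.1.cycleOf i0,
      fun j => if p.1.SameCycle i0 j then p.2 j else false) with hz_def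
    have hz1 : ∀ j, z.1 j = if p.1.SameCycle i0 j then p.1 j else j := by
      intro j
      simp only [hz_def]
      exact p.1.cycleOf_apply i0 j
    have hzcomm : bmul z p = bmul p z := by
      refine Prod.ext (Equiv.ext fun j => ?_) (funext fun j => ?_)
      · show (z.1 * p.1) j = (p.1 * z.1) j
        simp only [Equiv.Perm.mul_apply, hz1]
        by_cases hj : p.1.SameCycle i0 j
        · rw [if_pos (Equiv.Perm.sameCycle_apply_right.2 hj), if_pos hj]
        · rw [if_neg (fun h => hj (Equiv.Perm.sameCycle_apply_right.1 h)), if_neg hj]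
      · show xor (z.2 (p.1 j)) (p.2 j) = xor (p.2 (z.1 j)) (z.2 j)
        rw [hz1]
        simp only [hz_def]
        by_cases hj : p.1.SameCycle i0 j
        · rw [if_pos (Equiv.Perm.sameCycle_apply_right.2 hj), if_pos hj, if_pos hj]
        · rw [if_neg (fun h => hj (Equiv.Perm.sameCycle_apply_right.1 h)),
            if_neg hj, if_neg hj]
          rw [Bool.false_xor, Bool.xor_false]
    have hsz : signProdZ z = -1 := by
      rw [signProdZ]
      have hzz : ∀ j : Fin n, (if z.2 j then (-1:ℤ) else 1)
          = if p.1.SameCycle i0 j then (if p.2 j then (-1:ℤ) else 1) else 1 := by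
        intro j
        simp only [hz_def]
        by_cases hj : p.1.SameCycle i0 j <;> simp [hj]
      rw [Finset.prod_congr rfl (fun j _ => hzz j), ← Finset.prod_filter]
      exact hp i0
    have hsr0 : signProdZ r0 = -1 := by
      rcases signProdZ_pm r0 with h | h
      · exact absurd ((inD_iff_signProdZ r0).2 h) hr0
      · exact h
    refine ⟨bmul r0 z, ?_, ?_⟩
    · rw [inD_iff_signProdZ, signProdZ_bmul, hsz, hsr0]
      norm_num
    · have hm0 : BMatQ n r0 * BMatQ n p = BMatQ n p' * BMatQ n r0 := by
        rw [← BMatQ_bmul, ← BMatQ_bmul, key0]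
      have hmz : BMatQ n z * BMatQ n p = BMatQ n p * BMatQ n z := by
        rw [← BMatQ_bmul, ← BMatQ_bmul, hzcomm]
      calc BMatQ n (bmul r0 z) * BMatQ n p
          = BMatQ n r0 * BMatQ n z * BMatQ n p := by rw [BMatQ_bmul]
        _ = BMatQ n r0 * (BMatQ n z * BMatQ n p) := by rw [mul_assoc]
        _ = BMatQ n r0 * (BMatQ n p * BMatQ n z) := by rw [hmz]
        _ = BMatQ n r0 * BMatQ n p * BMatQ n z := by rw [mul_assoc]
        _ = BMatQ n p' * BMatQ n r0 * BMatQ n z := by rw [hm0]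
        _ = BMatQ n p' * (BMatQ n r0 * BMatQ n z) := by rw [mul_assoc]
        _ = BMatQ n p' * BMatQ n (bmul r0 z) := by rw [BMatQ_bmul]

end Part4
section Part5
variable {n : ℕ}

/-- Part 5 : every partition is realized by an all-negative element. -/
lemma exists_negAll_of_partition (α : Nat.Partition n) :
    ∃ p : BElt n, negAll n p ∧ cycType n p = α.parts := by
  have h4 : (α.parts.filter (fun a => 2 ≤ a)).sum
      + (α.parts.filter (fun a => ¬ 2 ≤ a)).sum = n := by
    rw [← Multiset.sum_add, Multiset.filter_add_not, α.parts_sum]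
  have hex : ∃ σ : Equiv.Perm (Fin n), σ.cycleType = α.parts.filter (fun a => 2 ≤ a) := by
    rw [Equiv.Perm.exists_with_cycleType_iff]
    constructor
    · rw [Fintype.card_fin]
      omega
    · intro a ha
      exact (Multiset.mem_filter.1 ha).2
  obtain ⟨σ, hσ⟩ := hex
  refine ⟨(σ, fun j => decide (cbase σ j = j)), ?_, ?_⟩
  · -- all cycles negative
    intro i
    show (∏ j ∈ orb σ i, if (decide (cbase σ j = j)) = true then (-1:ℤ) else 1) = -1
    have hmem : cbase σ i ∈ orb σ i := mem_orb.2 (sameCycle_cbase σ i)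
    have h0 : ∀ j ∈ orb σ i, j ≠ cbase σ i →
        (if (decide (cbase σ j = j)) = true then (-1:ℤ) else 1) = 1 := by
      intro j hj hne
      rw [if_neg]
      simp only [decide_eq_true_eq]
      have hbj : cbase σ j = cbase σ i := (cbase_eq_of_sameCycle (mem_orb.1 hj)).symm
      rw [hbj]
      exact fun hcon => hne hcon.symm
    rw [Finset.prod_eq_single_of_mem (cbase σ i) hmem h0]
    simp [cbase_cbase σ i]
  · -- the cycle type is α
    show (Equiv.Perm.partition σ).parts = α.parts
    rw [Equiv.Perm.parts_partition, hσ]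
    have hone : α.parts.filter (fun a => ¬ 2 ≤ a)
        = Multiset.replicate ((α.parts.filter (fun a => ¬ 2 ≤ a)).card) 1 := by
      rw [Multiset.eq_replicate_card]
      intro b hb
      have h1 := (Multiset.mem_filter.1 hb).2
      have h2 := α.parts_pos (Multiset.mem_filter.1 hb).1
      omega
    have hsum2 : (α.parts.filter (fun a => ¬ 2 ≤ a)).sum
        = (α.parts.filter (fun a => ¬ 2 ≤ a)).card := by
      conv_lhs => rw [hone]
      rw [Multiset.sum_replicate, smul_eq_mul, mul_one]
    have hsupp : σ.support.card = (α.parts.filter (fun a => 2 ≤ a)).sum := by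
      rw [← Equiv.Perm.sum_cycleType, hσ]
    have hk : Fintype.card (Fin n) - σ.support.card
        = (α.parts.filter (fun a => ¬ 2 ≤ a)).card := by
      rw [Fintype.card_fin, hsupp]
      omega
    rw [hk, ← hone, Multiset.filter_add_not]

end Part5

theorem statement13 (n : ℕ) :
    -- w_α ∈ W(D_n) iff the number of parts |α| is even
    (∀ p : BElt n, negAll n p →
        (inD n p ↔ Even (Multiset.card (cycType n p)))) ∧
    -- each w_α is elliptic
    (∀ p : BElt n, negAll n p →
        Matrix.det ((1 : Matrix (Fin n) (Fin n) ℚ) - BMatQ n p) ≠ 0) ∧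
    -- every elliptic element of W(D_n) is W(D_n)-conjugate to some w_α ∈ W(D_n)
    (∀ p' : BElt n, inD n p' →
        Matrix.det ((1 : Matrix (Fin n) (Fin n) ℚ) - BMatQ n p') ≠ 0 →
        ∃ p : BElt n, negAll n p ∧ inD n p ∧ ConjD n p p') ∧
    -- two such representatives are W(D_n)-conjugate iff they have the same type
    (∀ p p' : BElt n, negAll n p → negAll n p' → inD n p → inD n p' →
        (ConjD n p p' ↔ cycType n p = cycType n p')) ∧
    -- every partition α of n with an even number of parts is realized by some w_α
    (∀ α : Nat.Partition n, Even (Multiset.card α.parts) →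
        ∃ p : BElt n, negAll n p ∧ cycType n p = α.parts) := by
  refine ⟨fun p hp => part1 p hp, fun p hp => elliptic_of_negAll p hp, ?_, ?_, ?_⟩
  · intro p' hD hdet
    refine ⟨p', negAll_of_elliptic p' hdet, hD,
      ⟨(1, fun _ => false), ?_, by rw [BMatQ_one, one_mul, mul_one]⟩⟩
    simp [inD]
  · intro p p' hp hp' _ _
    exact ⟨cycType_eq_of_conjD p p', conjD_of_cycType_eq p p' hp hp'⟩
  · intro α _
    exact exists_negAll_of_partition α

end
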